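/- arXiv:1301.5833 — 4 statements merged into one kernel-verified Lean document; each statement's English description precedes it below -/
import Mathlib

section
/- Let gl̃ᵉ_∞ = E ⊗ C((t)) ⊕ C k, where E has basis {e_m | m ∈ Z} and k is a central element, with bracket defined on generators (in terms of generating functions B_t(m,x) = Σ_{n∈Z} (e_m ⊗ t^n) x^{-n-1}) by [B_t(m,x₁), B_t(n,x₂)] = e^{(m-n)(x₁-x₂)} ( B_t(m,x₂) - B_t(n,x₁) + f(m,n) k ). Then this bracket is well-defined, bilinear, skew-symmetric, and satisfies the Jacobi identity, so gl̃ᵉ_∞ is a Lie algebra. -/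
noncomputable section

/-- `f m n = 1` if `m ≤ 0` and `n ≥ 1`, `f m n = -1` if `n ≤ 0` and `m ≥ 1`, else `0`. -/
def f (m n : ℤ) : ℤ :=
  if m ≤ 0 ∧ 1 ≤ n then 1 else if n ≤ 0 ∧ 1 ≤ m then -1 else 0

/-- The formal exponential series `e^{c x} = Σ_{n≥0} c^n x^n / n!`, as a Laurent series. -/
def expS (c : ℤ) : LaurentSeries ℂ :=
  HahnSeries.ofPowerSeries ℤ ℂ (PowerSeries.mk fun n => (c : ℂ) ^ n / n.factorial)

/-- The formal residue: the coefficient of `x^{-1}`. -/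
def Res (g : LaurentSeries ℂ) : ℂ := g.coeff (-1)

/-- The underlying space of `gl̃ᵉ_∞ = E ⊗ ℂ((t)) ⊕ ℂ k`, where `E` has basis
`{e_m | m ∈ ℤ}`: finitely supported families of Laurent series, plus a central line. -/
abbrev V : Type := (ℤ →₀ LaurentSeries ℂ) × ℂ

/-- `e_m ⊗ g(t)`, as an element of `gl̃ᵉ_∞`. -/
def gen (m : ℤ) (g : LaurentSeries ℂ) : V := (Finsupp.single m g, 0)

/-- The central element `k`. -/
def K : V := (0, 1)

/-- The bracket of `gl̃ᵉ_∞`, determined by the residue formula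
`[e_m ⊗ g, e_n ⊗ h] = Res_{x₁} Res_{x₂} g(x₁) h(x₂) e^{(m-n)(x₁-x₂)}
(B_t(m,x₂) - B_t(n,x₁) + f(m,n) k)`, i.e.
`[e_m ⊗ g, e_n ⊗ h] = Res(e^{(m-n)x} g) · e_m ⊗ e^{(n-m)t} h
  - Res(e^{(n-m)x} h) · e_n ⊗ e^{(m-n)t} g + Res(e^{(m-n)x} g) Res(e^{(n-m)x} h) f(m,n) k`,
with `k` central. -/
def br (a b : V) : V :=
  a.1.sum fun m g => b.1.sum fun n h =>
    (Res (expS (m - n) * g) • Finsupp.single m (expS (n - m) * h)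
       - Res (expS (n - m) * h) • Finsupp.single n (expS (m - n) * g),
     Res (expS (m - n) * g) * Res (expS (n - m) * h) * (f m n : ℂ))

/-! ### exp and Res lemmas -/

lemma expS_eq (c : ℤ) :
    expS c = HahnSeries.ofPowerSeries ℤ ℂ (PowerSeries.rescale (c : ℂ) (PowerSeries.exp ℂ)) := by
  unfold expS
  congr 1
  ext n
  simp [PowerSeries.coeff_rescale, PowerSeries.coeff_exp, div_eq_mul_inv, map_inv₀]

lemma expS_mul (c d : ℤ) : expS c * expS d = expS (c + d) := by
  rw [expS_eq, expS_eq, expS_eq, ← map_mul, PowerSeries.exp_mul_exp_eq_exp_add]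
  push_cast
  rfl

lemma expS_mul_assoc (c d : ℤ) (q : LaurentSeries ℂ) :
    expS c * (expS d * q) = expS (c + d) * q := by
  rw [← mul_assoc, expS_mul]

@[simp] lemma Res_zero : Res 0 = 0 := rfl
lemma Res_add (a b : LaurentSeries ℂ) : Res (a + b) = Res a + Res b := by simp [Res]
lemma Res_smul (s : ℂ) (a : LaurentSeries ℂ) : Res (s • a) = s * Res a := by simp [Res]

/-! ### smul bridging lemmas (the `•` in the statement is via `Finsupp.smulZeroClass`) -/

section bridge
variable (s t : ℂ) (x y : ℤ →₀ LaurentSeries ℂ) (q r : LaurentSeries ℂ) (a b : V)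

lemma Fz : (0 : ℂ) • x = 0 := zero_smul ℂ x
lemma Fsz : s • (0 : ℤ →₀ LaurentSeries ℂ) = 0 := smul_zero s
lemma Fadds : (s + t) • x = s • x + t • x := add_smul s t x
lemma Fsadd : s • (x + y) = s • x + s • y := smul_add s x y
lemma Fssub : s • (x - y) = s • x - s • y := smul_sub s x y
lemma Fmuls : (s * t) • x = s • t • x := mul_smul s t x
lemma Fneg : (-s) • x = -(s • x) := neg_smul s x
lemma Fcomm : s • t • x = t • s • x := by rw [← Fmuls, mul_comm, Fmuls]
lemma Fsingle_smul (m : ℤ) : Finsupp.single m (s • q) = s • Finsupp.single m q :=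
  (Finsupp.smul_single s m q).symm
lemma Lsmul_smul : (HahnSeries.C s : LaurentSeries ℂ) * r = s • r := HahnSeries.C_mul_eq_smul
lemma Lsmul_mul : q * (s • r) = s • (q * r) := by
  rw [← Lsmul_smul, ← Lsmul_smul, mul_left_comm]
lemma Vsmul_mk (w : ℤ →₀ LaurentSeries ℂ) (c : ℂ) : s • ((w, c) : V) = (s • w, s * c) := rfl
lemma Vz : (0 : ℂ) • a = 0 := by
  obtain ⟨w, c⟩ := a
  rw [Vsmul_mk, Fz, zero_mul]; rfl
lemma Vsz : s • (0 : V) = 0 := by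
  rw [show (0 : V) = ((0 : ℤ →₀ LaurentSeries ℂ), (0 : ℂ)) from rfl, Vsmul_mk, Fsz, mul_zero]
lemma Vadds : (s + t) • a = s • a + t • a := by
  obtain ⟨w, c⟩ := a
  rw [Vsmul_mk, Vsmul_mk, Vsmul_mk, Prod.mk_add_mk, Fadds, add_mul]
lemma Vsadd : s • (a + b) = s • a + s • b := by
  obtain ⟨w, c⟩ := a; obtain ⟨w', c'⟩ := b
  rw [Prod.mk_add_mk, Vsmul_mk, Vsmul_mk, Vsmul_mk, Prod.mk_add_mk, Fsadd, mul_add]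
lemma Vssub : s • (a - b) = s • a - s • b := by
  obtain ⟨w, c⟩ := a; obtain ⟨w', c'⟩ := b
  rw [Prod.mk_sub_mk, Vsmul_mk, Vsmul_mk, Vsmul_mk, Prod.mk_sub_mk, Fssub, mul_sub]
lemma Vmuls : (s * t) • a = s • t • a := by
  obtain ⟨w, c⟩ := a
  rw [Vsmul_mk, Vsmul_mk, Vsmul_mk, Fmuls, mul_assoc]
lemma Vneg : (-s) • a = -(s • a) := by
  obtain ⟨w, c⟩ := a
  rw [Vsmul_mk, Vsmul_mk, Prod.neg_mk, Fneg, neg_mul]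

end bridge

/-! ### the generator bracket -/

def T (m : ℤ) (g : LaurentSeries ℂ) (n : ℤ) (h : LaurentSeries ℂ) : V :=
  (Res (expS (m - n) * g) • Finsupp.single m (expS (n - m) * h)
     - Res (expS (n - m) * h) • Finsupp.single n (expS (m - n) * g),
   Res (expS (m - n) * g) * Res (expS (n - m) * h) * (f m n : ℂ))

lemma br_def (a b : V) : br a b = a.1.sum fun m g => b.1.sum fun n h => T m g n h := rfl

lemma T_zero_left (m n : ℤ) (h : LaurentSeries ℂ) : T m 0 n h = 0 := by
  unfold T
  rw [mul_zero, Res_zero, Fz, Finsupp.single_zero, Fsz, zero_mul, zero_mul]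
  exact congrArg₂ Prod.mk (sub_zero (0 : ℤ →₀ LaurentSeries ℂ)) rfl

lemma T_zero_right (m n : ℤ) (g : LaurentSeries ℂ) : T m g n 0 = 0 := by
  unfold T
  rw [mul_zero, Res_zero, Fz, Finsupp.single_zero, Fsz, mul_zero, zero_mul]
  exact congrArg₂ Prod.mk (by exact sub_self (0 : ℤ →₀ LaurentSeries ℂ)) rfl

lemma T_add_left (m n : ℤ) (g g' h : LaurentSeries ℂ) :
    T m (g + g') n h = T m g n h + T m g' n h := by
  unfold T
  rw [Prod.mk_add_mk, Prod.mk.injEq]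
  rw [mul_add, Res_add, Finsupp.single_add, Fadds, Fsadd]
  exact ⟨by abel, by ring⟩

lemma T_add_right (m n : ℤ) (g h h' : LaurentSeries ℂ) :
    T m g n (h + h') = T m g n h + T m g n h' := by
  unfold T
  rw [Prod.mk_add_mk, Prod.mk.injEq]
  rw [mul_add, Res_add, Finsupp.single_add, Fadds, Fsadd]
  exact ⟨by abel, by ring⟩

lemma T_smul_left (c : ℂ) (m n : ℤ) (g h : LaurentSeries ℂ) :
    T m (c • g) n h = c • T m g n h := by
  unfold T
  rw [Lsmul_mul, Res_smul, Fsingle_smul, Vsmul_mk, Prod.mk.injEq]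
  constructor
  · rw [Fmuls, Fcomm (Res (expS (n - m) * h)) c, ← Fssub]
  · ring

lemma T_smul_right (c : ℂ) (m n : ℤ) (g h : LaurentSeries ℂ) :
    T m g n (c • h) = c • T m g n h := by
  unfold T
  rw [Lsmul_mul, Res_smul, Fsingle_smul, Vsmul_mk, Prod.mk.injEq]
  constructor
  · rw [Fmuls, Fcomm (Res (expS (m - n) * g)) c, ← Fssub]
  · ring

/-! ### more bridging -/

lemma Fneg1 (x : ℤ →₀ LaurentSeries ℂ) : -x = (-1 : ℂ) • x := (neg_one_smul ℂ x).symm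
lemma Vneg1 (a : V) : -a = (-1 : ℂ) • a := by
  obtain ⟨w, c⟩ := a
  rw [Vsmul_mk, Prod.neg_mk, Fneg1, neg_one_mul]

/-! ### bilinearity of br -/

lemma br_add_left (a b c : V) : br (a + b) c = br a c + br b c := by
  rw [br_def, br_def, br_def]
  rw [show (a + b).1 = a.1 + b.1 from rfl]
  refine Finsupp.sum_add_index' (fun m => ?_) (fun m g g' => ?_)
  · simp only [T_zero_left]
    exact Finset.sum_const_zero
  · simp only [T_add_left]
    exact Finsupp.sum_add

lemma br_add_right (a b c : V) : br a (b + c) = br a b + br a c := by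
  rw [br_def, br_def, br_def]
  rw [show (b + c).1 = b.1 + c.1 from rfl]
  have : (fun m g => (b.1 + c.1).sum (T m g))
      = fun m g => b.1.sum (T m g) + c.1.sum (T m g) := by
    funext m g
    exact Finsupp.sum_add_index' (fun n => T_zero_right m n g) (fun n h h' => T_add_right m n g h h')
  rw [this]
  exact Finsupp.sum_add

lemma Vsmul_sum (s : ℂ) (w : ℤ →₀ LaurentSeries ℂ) (F : ℤ → LaurentSeries ℂ → V) :
    s • w.sum F = w.sum fun n h => s • F n h :=
  Finsupp.smul_sum (v := w) (c := s) (h := F)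

lemma br_smul_left (s : ℂ) (a b : V) : br (s • a) b = s • br a b := by
  rw [br_def, br_def]
  rw [show (s • a).1 = s • a.1 from rfl]
  rw [Finsupp.sum_smul_index' (fun m => by simp only [T_zero_left]; exact Finset.sum_const_zero)]
  rw [Vsmul_sum]
  congr 1
  funext m g
  simp only [T_smul_left]
  exact (Vsmul_sum s b.1 (T m g)).symm

lemma br_smul_right (s : ℂ) (a b : V) : br a (s • b) = s • br a b := by
  rw [br_def, br_def]
  rw [show (s • b).1 = s • b.1 from rfl]
  have : (fun m g => (s • b.1).sum (T m g)) = fun m g => s • b.1.sum (T m g) := by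
    funext m g
    rw [Finsupp.sum_smul_index' (fun n => T_zero_right m n g)]
    simp only [T_smul_right]
    exact (Vsmul_sum s b.1 (T m g)).symm
  rw [this]
  exact (Vsmul_sum s a.1 _).symm

lemma br_K_left (a : V) : br K a = 0 := by
  rw [br_def, show (K).1 = (0 : ℤ →₀ LaurentSeries ℂ) from rfl]
  exact Finsupp.sum_zero_index

lemma br_K_right (a : V) : br a K = 0 := by
  rw [br_def, show (K).1 = (0 : ℤ →₀ LaurentSeries ℂ) from rfl]
  have : (fun m (g : LaurentSeries ℂ) => (0 : ℤ →₀ LaurentSeries ℂ).sum (T m g))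
      = fun _ _ => (0 : V) := by
    funext m g
    exact Finsupp.sum_zero_index
  rw [this]
  exact Finset.sum_const_zero

/-! ### zero brackets -/

lemma br_zero_left (a : V) : br 0 a = 0 := by
  rw [br_def, show (0 : V).1 = (0 : ℤ →₀ LaurentSeries ℂ) from rfl]
  exact Finsupp.sum_zero_index

lemma br_zero_right (a : V) : br a 0 = 0 := by
  rw [br_def, show (0 : V).1 = (0 : ℤ →₀ LaurentSeries ℂ) from rfl]
  have : (fun m (g : LaurentSeries ℂ) => (0 : ℤ →₀ LaurentSeries ℂ).sum (T m g))
      = fun _ _ => (0 : V) := by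
    funext m g
    exact Finsupp.sum_zero_index
  rw [this]
  exact Finset.sum_const_zero

/-! ### the bracket on generators -/

lemma br_genT (l m : ℤ) (g h : LaurentSeries ℂ) : br (gen l g) (gen m h) = T l g m h := by
  rw [br_def, show (gen l g).1 = Finsupp.single l g from rfl,
    show (gen m h).1 = Finsupp.single m h from rfl]
  have h0 : (Finsupp.single m h).sum (fun n p => T l 0 n p) = 0 := by
    simp only [T_zero_left]
    exact Finset.sum_const_zero
  rw [Finsupp.sum_single_index h0, Finsupp.sum_single_index (T_zero_right l m g)]

lemma br_gen (l m : ℤ) (g h : LaurentSeries ℂ) :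
    br (gen l g) (gen m h)
      = Res (expS (l - m) * g) • gen l (expS (m - l) * h)
        + (-Res (expS (m - l) * h)) • gen m (expS (l - m) * g)
        + (Res (expS (l - m) * g) * Res (expS (m - l) * h) * (f l m : ℂ)) • K := by
  rw [br_genT]
  unfold T gen K
  refine Prod.ext_iff.mpr ⟨?_, ?_⟩
  · show Res (expS (l - m) * g) • Finsupp.single l (expS (m - l) * h)
        - Res (expS (m - l) * h) • Finsupp.single m (expS (l - m) * g)
      = Res (expS (l - m) * g) • Finsupp.single l (expS (m - l) * h)
        + (-Res (expS (m - l) * h)) • Finsupp.single m (expS (l - m) * g)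
        + (Res (expS (l - m) * g) * Res (expS (m - l) * h) * (f l m : ℂ))
            • (0 : ℤ →₀ LaurentSeries ℂ)
    rw [Fneg, Fsz]
    abel
  · show Res (expS (l - m) * g) * Res (expS (m - l) * h) * (f l m : ℂ)
      = Res (expS (l - m) * g) * 0 + -Res (expS (m - l) * h) * 0
        + Res (expS (l - m) * g) * Res (expS (m - l) * h) * (f l m : ℂ) * 1
    ring

/-! ### the 2-cocycle is a coboundary -/

def theta (m : ℤ) : ℂ := if 1 ≤ m then 1 else 0

lemma f_eq (m n : ℤ) : (f m n : ℂ) = theta n - theta m := by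
  unfold f theta
  split_ifs <;> first | omega | norm_num

/-! ### telescoping -/

lemma expS_tele (x y z : ℤ) (q : LaurentSeries ℂ) :
    expS (x - y) * (expS (z - x) * q) = expS (z - y) * q := by
  rw [expS_mul_assoc, show x - y + (z - x) = z - y by ring]

/-! ### induction principle -/

lemma V_induction (P : V → Prop) (hadd : ∀ x y, P x → P y → P (x + y))
    (hsmul : ∀ (s : ℂ) x, P x → P (s • x)) (hgen : ∀ m g, P (gen m g)) (hK : P K) :
    ∀ a, P a := by
  have h0 : P 0 := by
    have := hsmul 0 K hK
    rwa [Vz] at this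
  intro a
  obtain ⟨w, s⟩ := a
  have hw : ∀ w : ℤ →₀ LaurentSeries ℂ, P (w, 0) := by
    intro w
    induction w using Finsupp.induction with
    | zero => exact h0
    | single_add m g w _ _ ih =>
      have h1 := hadd _ _ (hgen m g) ih
      rw [show gen m g + ((w, 0) : V) = ((Finsupp.single m g + w, 0) : V) by
        rw [gen, Prod.mk_add_mk, add_zero]] at h1
      exact h1
  have h2 := hadd _ _ (hw w) (hsmul s K hK)
  rw [show ((w, 0) : V) + s • K = ((w, s) : V) by
    rw [K, Vsmul_mk, Prod.mk_add_mk]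
    refine Prod.ext_iff.mpr ⟨?_, by rw [zero_add, mul_one]⟩
    rw [smul_zero]
    exact add_zero w] at h2
  exact h2

lemma skew_gen (m n : ℤ) (g h : LaurentSeries ℂ) :
    br (gen m g) (gen n h) = - br (gen n h) (gen m g) := by
  rw [br_gen, br_gen, Vneg1, Vsadd, Vsadd]
  simp only [f_eq]
  match_scalars <;> ring

lemma jacobi_gen (l m n : ℤ) (g h p : LaurentSeries ℂ) :
    br (gen l g) (br (gen m h) (gen n p))
      = br (br (gen l g) (gen m h)) (gen n p)
        + br (gen m h) (br (gen l g) (gen n p)) := by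
  rw [br_gen m n h p, br_gen l m g h, br_gen l n g p]
  simp only [br_add_left, br_add_right, br_smul_left, br_smul_right, br_K_left, br_K_right,
    br_gen, Vsz, add_zero, expS_tele, f_eq]
  match_scalars <;> ring

lemma Vsneg (s : ℂ) (a : V) : s • (-a) = -(s • a) := by
  rw [Vneg1, ← Vmuls, show s * (-1) = (-1) * s from mul_comm s (-1), Vmuls, ← Vneg1]

attribute [irreducible] br gen K expS Res

lemma skew (a b : V) : br a b = - br b a := by
  refine V_induction (fun a => ∀ b, br a b = - br b a) ?_ ?_ ?_ ?_ a b
  · intro x y hx hy b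
    rw [br_add_left, hx b, hy b, br_add_right]
    abel
  · intro s x hx b
    rw [br_smul_left, hx b, br_smul_right, Vsneg]
  · intro m g
    refine V_induction (fun b => br (gen m g) b = - br b (gen m g)) ?_ ?_ ?_ ?_
    · intro x y hx hy
      rw [br_add_right, hx, hy, br_add_left]
      abel
    · intro s x hx
      rw [br_smul_right, hx, br_smul_left, Vsneg]
    · intro n h
      exact skew_gen m n g h
    · show br (gen m g) K = - br K (gen m g)
      rw [br_K_right, br_K_left]
      abel
  · intro b
    rw [br_K_left, br_K_right]
    abel

lemma jacobi (a b c : V) : br a (br b c) = br (br a b) c + br b (br a c) := by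
  refine V_induction
    (fun c => ∀ a b, br a (br b c) = br (br a b) c + br b (br a c)) ?_ ?_ ?_ ?_ c a b
  · intro x y hx hy a b
    simp only [br_add_right]
    rw [hx a b, hy a b]
    abel
  · intro s x hx a b
    simp only [br_smul_right]
    rw [hx a b, Vsadd]
  · intro n p
    intro a b
    refine V_induction
      (fun b => ∀ a, br a (br b (gen n p)) = br (br a b) (gen n p) + br b (br a (gen n p)))
      ?_ ?_ ?_ ?_ b a
    · intro x y hx hy a
      simp only [br_add_left, br_add_right]
      rw [hx a, hy a]
      abel
    · intro s x hx a
      simp only [br_smul_left, br_smul_right]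
      rw [hx a, Vsadd]
    · intro m h
      refine V_induction
        (fun a => br a (br (gen m h) (gen n p))
          = br (br a (gen m h)) (gen n p) + br (gen m h) (br a (gen n p))) ?_ ?_ ?_ ?_
      · intro x y hx hy
        simp only [br_add_left, br_add_right]
        rw [hx, hy]
        abel
      · intro s x hx
        simp only [br_smul_left]
        rw [hx, Vsadd, br_smul_right]
      · intro l g
        exact jacobi_gen l m n g h p
      · show br K (br (gen m h) (gen n p))
            = br (br K (gen m h)) (gen n p) + br (gen m h) (br K (gen n p))
        rw [br_K_left, br_K_left, br_K_left, br_zero_left, br_zero_right]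
        abel
    · intro a
      show br a (br K (gen n p)) = br (br a K) (gen n p) + br K (br a (gen n p))
      rw [br_K_left, br_zero_right, br_K_right, br_zero_left, br_K_left]
      abel
  · intro a b
    rw [br_K_right, br_K_right, br_K_right, br_zero_right, br_zero_right]
    abel

/-- The bracket on `gl̃ᵉ_∞ = E ⊗ ℂ((t)) ⊕ ℂ k` is well defined, bilinear, skew-symmetric
and satisfies the Jacobi (Leibniz) identity, so `gl̃ᵉ_∞` is a Lie algebra. -/
theorem glTildeE_is_Lie_algebra :
    (∀ a b c : V, br (a + b) c = br a c + br b c) ∧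
    (∀ a b c : V, br a (b + c) = br a b + br a c) ∧
    (∀ (s : ℂ) (a b : V), br (s • a) b = s • br a b) ∧
    (∀ (s : ℂ) (a b : V), br a (s • b) = s • br a b) ∧
    (∀ a b : V, br a b = - br b a) ∧
    (∀ a b c : V, br a (br b c) = br (br a b) c + br b (br a c)) := by
  exact ⟨fun a b c => br_add_left a b c, fun a b c => br_add_right a b c,
    fun s a b => br_smul_left s a b, fun s a b => br_smul_right s a b,
    skew, jacobi⟩
end
end

section
/- Let W be a gl̃_∞-module of level ℓ such that for every m ∈ Z and w ∈ W, E_{m,m+n} w = 0 for all but finitely many n ∈ Z. Define operators B̄(m,-k-1) = Σ_{n∈Z} ((-n)^k / k!) E_{m,m+n} for k ≥ 0 and B̄(m,r) = 0 for r ≥ 0. Then these operators satisfy the defining relations of gl̃ᵉ_∞ at level ℓ; i.e., setting B̄(m,x) = Σ_n B̄(m,n) x^{-n-1} = Σ_{n∈Z} E_{m,m+n} e^{-nx}, one has [B̄(m,x₁), B̄(n,x₂)] = e^{(m-n)(x₁-x₂)}(B̄(m,x₂) - B̄(n,x₁) + f(m,n)ℓ), making W a restricted gl̃ᵉ_∞-module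 of level ℓ. -/
noncomputable section

/-- Given operators `Eop m n` (the action of `E_{m,n}`), the operator
`B̄(m,-p-1) = Σ_{j∈ℤ} ((-j)^p / p!) E_{m,m+j}`, i.e. the coefficient of `x^p` in
`B̄(m,x) = Σ_{j∈ℤ} E_{m,m+j} e^{-jx}`.  (The operators `B̄(m,r)` with `r ≥ 0` are zero.) -/
def Cop {W : Type*} [AddCommGroup W] [Module ℂ W]
    (Eop : ℤ → ℤ → Module.End ℂ W) (m : ℤ) (p : ℕ) (w : W) : W :=
  ∑ᶠ j : ℤ, ((-(j : ℂ)) ^ p / p.factorial) • Eop m (m + j) w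

lemma coeff_binom (d j : ℂ) (q : ℕ) :
    (-(j - d)) ^ q / q.factorial
      = ∑ k ∈ Finset.range (q + 1),
          (d ^ k / k.factorial) * ((-j) ^ (q - k) / (q - k).factorial) := by
  have h : -(j - d) = d + (-j) := by ring
  rw [h, add_pow, Finset.sum_div]
  refine Finset.sum_congr rfl fun k hk => ?_
  have hk' : k ≤ q := by
    simp only [Finset.mem_range] at hk; omega
  have hf := Nat.choose_mul_factorial_mul_factorial hk'
  have h1 : (k.factorial : ℂ) ≠ 0 := by exact_mod_cast k.factorial_ne_zero
  have h2 : ((q - k).factorial : ℂ) ≠ 0 := by exact_mod_cast (q - k).factorial_ne_zero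
  have h3 : (q.factorial : ℂ) ≠ 0 := by exact_mod_cast q.factorial_ne_zero
  field_simp
  rw [← hf]
  push_cast
  ring

lemma Cop_eq_sum {W : Type*} [AddCommGroup W] [Module ℂ W]
    (Eop : ℤ → ℤ → Module.End ℂ W) (m : ℤ) (p : ℕ) (w : W) (s : Finset ℤ)
    (h : Function.support (fun j : ℤ => Eop m (m + j) w) ⊆ ↑s) :
    Cop Eop m p w = ∑ j ∈ s, ((-(j : ℂ)) ^ p / p.factorial) • Eop m (m + j) w := by
  refine finsum_eq_sum_of_support_subset _ ?_
  intro j hj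
  apply h
  simp only [Function.mem_support] at hj ⊢
  intro h0
  apply hj
  rw [h0, smul_zero]

lemma shift_sum {W : Type*} [AddCommGroup W] [Module ℂ W]
    (Eop : ℤ → ℤ → Module.End ℂ W) (m d : ℤ) (q : ℕ) (w : W) (s : Finset ℤ)
    (hA : Function.support (fun j : ℤ => Eop m (m + j) w) ⊆ ↑s)
    (hA' : ∀ j : ℤ, Eop m (m + j) w ≠ 0 → j - d ∈ s) :
    ∑ j ∈ s, ((-(j : ℂ)) ^ q / q.factorial) • Eop m (m + d + j) w
      = ∑ k ∈ Finset.range (q + 1),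
          (((d : ℂ)) ^ k / k.factorial) • Cop Eop m (q - k) w := by
  set F : ℤ → W := fun j' => ((-((j' : ℂ) - (d : ℂ))) ^ q / q.factorial) • Eop m (m + j') w with hF
  have h1 : ∑ j ∈ s, ((-(j : ℂ)) ^ q / q.factorial) • Eop m (m + d + j) w
      = ∑ j' ∈ s.image (· + d), F j' := by
    rw [Finset.sum_image (by intro x _ y _ h; exact add_right_cancel h)]
    refine Finset.sum_congr rfl fun j _ => ?_
    simp only [hF]
    have e1 : m + (j + d) = m + d + j := by ring
    have e2 : (-(((j + d : ℤ) : ℂ) - (d : ℂ))) = (-(j : ℂ)) := by push_cast; ring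
    rw [e1, e2]
  have hsup : Function.support F ⊆ {j' : ℤ | Eop m (m + j') w ≠ 0} := by
    intro j' hj'
    simp only [Function.mem_support, hF] at hj'
    simp only [Set.mem_setOf_eq]
    intro h0
    apply hj'
    rw [h0, smul_zero]
  have h2 : ∑ j' ∈ s.image (· + d), F j' = ∑ᶠ j', F j' := by
    refine (finsum_eq_sum_of_support_subset _ ?_).symm
    intro j' hj'
    have hne := hsup hj'
    simp only [Set.mem_setOf_eq] at hne
    simp only [Finset.coe_image, Set.mem_image]
    exact ⟨j' - d, hA' j' hne, by omega⟩
  have h3 : ∑ᶠ j', F j' = ∑ j' ∈ s, F j' := by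
    refine finsum_eq_sum_of_support_subset _ ?_
    intro j' hj'
    have hne := hsup hj'
    exact hA hne
  rw [h1, h2, h3]
  have h4 : ∀ j' ∈ s, F j' = ∑ k ∈ Finset.range (q + 1),
      (((d : ℂ)) ^ k / k.factorial) •
        (((-(j' : ℂ)) ^ (q - k) / (q - k).factorial) • Eop m (m + j') w) := by
    intro j' _
    simp only [hF]
    rw [coeff_binom, Finset.sum_smul]
    refine Finset.sum_congr rfl fun k _ => ?_
    rw [smul_smul]
  rw [Finset.sum_congr rfl h4, Finset.sum_comm]
  refine Finset.sum_congr rfl fun k _ => ?_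
  rw [← Finset.smul_sum, ← Cop_eq_sum Eop m (q - k) w s hA]

/-- Let `W` be a `gl̃_∞`-module of level `ℓ` on which each `E(m,x)w` has only finitely
many nonzero coefficients.  Then the operators `B̄(m,x) = Σ_j E_{m,m+j} e^{-jx}`
satisfy the defining relations of `gl̃ᵉ_∞` at level `ℓ`:
`[B̄(m,x₁), B̄(n,x₂)] = e^{(m-n)(x₁-x₂)} (B̄(m,x₂) - B̄(n,x₁) + f(m,n) ℓ)`,
stated coefficientwise in `x₁^p x₂^q` (`p, q ≥ 0`), making `W` a restricted
`gl̃ᵉ_∞`-module of level `ℓ`. -/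
theorem transferred_gl_e_relations
    {W : Type*} [AddCommGroup W] [Module ℂ W]
    (Eop : ℤ → ℤ → Module.End ℂ W) (ℓ : ℂ)
    (hrel : ∀ m n r s : ℤ,
      Eop m n * Eop r s - Eop r s * Eop m n =
        (if n = r then Eop m s else 0) - (if m = s then Eop r n else 0)
          + (if m = s ∧ n = r then (f m n : ℂ) * ℓ else 0) • (1 : Module.End ℂ W))
    (hfin : ∀ (m : ℤ) (w : W), (Function.support fun j : ℤ => Eop m (m + j) w).Finite) :
    ∀ (m n : ℤ) (p q : ℕ) (w : W),
      Cop Eop m p (Cop Eop n q w) - Cop Eop n q (Cop Eop m p w)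
        = (((m : ℂ) - n) ^ p / p.factorial) •
            (∑ j ∈ Finset.range (q + 1),
              ((((n : ℂ) - m) ^ j / j.factorial) • Cop Eop m (q - j) w))
          - (((n : ℂ) - m) ^ q / q.factorial) •
            (∑ i ∈ Finset.range (p + 1),
              ((((m : ℂ) - n) ^ i / i.factorial) • Cop Eop n (p - i) w))
          + ((((m : ℂ) - n) ^ p / p.factorial) * (((n : ℂ) - m) ^ q / q.factorial)
              * (f m n : ℂ) * ℓ) • w := by
  intro m n p q w
  classical
  set s : Finset ℤ :=
    (hfin m w).toFinset ∪ (hfin n w).toFinset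
      ∪ (hfin n w).toFinset.biUnion (fun j => (hfin m (Eop n (n + j) w)).toFinset)
      ∪ (hfin m w).toFinset.biUnion (fun i => (hfin n (Eop m (m + i) w)).toFinset)
      ∪ (hfin m w).toFinset.image (· + (m - n))
      ∪ (hfin n w).toFinset.image (· + (n - m))
      ∪ {n - m, m - n} with hs
  have hA : ∀ j : ℤ, Eop m (m + j) w ≠ 0 → j ∈ s := by
    intro j h
    exact Finset.mem_union_left _ (Finset.mem_union_left _ (Finset.mem_union_left _
      (Finset.mem_union_left _ (Finset.mem_union_left _ (Finset.mem_union_left _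
        ((hfin m w).mem_toFinset.mpr h))))))
  have hB : ∀ j : ℤ, Eop n (n + j) w ≠ 0 → j ∈ s := by
    intro j h
    exact Finset.mem_union_left _ (Finset.mem_union_left _ (Finset.mem_union_left _
      (Finset.mem_union_left _ (Finset.mem_union_left _ (Finset.mem_union_right _
        ((hfin n w).mem_toFinset.mpr h))))))
  have hC : ∀ i j : ℤ, Eop m (m + i) (Eop n (n + j) w) ≠ 0 → Eop n (n + j) w ≠ 0 → i ∈ s := by
    intro i j h1 h2
    refine Finset.mem_union_left _ (Finset.mem_union_left _ (Finset.mem_union_left _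
      (Finset.mem_union_left _ (Finset.mem_union_right _ ?_))))
    exact Finset.mem_biUnion.mpr ⟨j, (hfin n w).mem_toFinset.mpr h2,
      (hfin m (Eop n (n + j) w)).mem_toFinset.mpr h1⟩
  have hD : ∀ i j : ℤ, Eop n (n + j) (Eop m (m + i) w) ≠ 0 → Eop m (m + i) w ≠ 0 → j ∈ s := by
    intro i j h1 h2
    refine Finset.mem_union_left _ (Finset.mem_union_left _ (Finset.mem_union_left _
      (Finset.mem_union_right _ ?_)))
    exact Finset.mem_biUnion.mpr ⟨i, (hfin m w).mem_toFinset.mpr h2,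
      (hfin n (Eop m (m + i) w)).mem_toFinset.mpr h1⟩
  have hA' : ∀ j : ℤ, Eop m (m + j) w ≠ 0 → j - (n - m) ∈ s := by
    intro j h
    refine Finset.mem_union_left _ (Finset.mem_union_left _ (Finset.mem_union_right _ ?_))
    exact Finset.mem_image.mpr ⟨j, (hfin m w).mem_toFinset.mpr h, by ring⟩
  have hB' : ∀ j : ℤ, Eop n (n + j) w ≠ 0 → j - (m - n) ∈ s := by
    intro j h
    refine Finset.mem_union_left _ (Finset.mem_union_right _ ?_)
    exact Finset.mem_image.mpr ⟨j, (hfin n w).mem_toFinset.mpr h, by ring⟩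
  have hnm : n - m ∈ s := Finset.mem_union_right _ (Finset.mem_insert_self _ _)
  have hmn : m - n ∈ s := Finset.mem_union_right _
    (Finset.mem_insert.mpr (Or.inr (Finset.mem_singleton_self _)))
  have hAsub : (Function.support fun j : ℤ => Eop m (m + j) w) ⊆ ↑s := fun j hj => hA j hj
  have hBsub : (Function.support fun j : ℤ => Eop n (n + j) w) ⊆ ↑s := fun j hj => hB j hj
  -- Step 1: express the two compositions as double finite sums
  have h1 : Cop Eop m p (Cop Eop n q w)
      = ∑ i ∈ s, ∑ j ∈ s,
          (((-(i : ℂ)) ^ p / p.factorial) * ((-(j : ℂ)) ^ q / q.factorial)) •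
            Eop m (m + i) (Eop n (n + j) w) := by
    rw [Cop_eq_sum Eop n q w s hBsub]
    simp only [Cop]
    have key : ∀ i : ℤ,
        ((-(i : ℂ)) ^ p / p.factorial) •
            Eop m (m + i) (∑ j ∈ s, ((-(j : ℂ)) ^ q / q.factorial) • Eop n (n + j) w)
          = ∑ j ∈ s, (((-(i : ℂ)) ^ p / p.factorial) * ((-(j : ℂ)) ^ q / q.factorial)) •
              Eop m (m + i) (Eop n (n + j) w) := by
      intro i
      rw [map_sum, Finset.smul_sum]
      exact Finset.sum_congr rfl fun j _ => by rw [map_smul, smul_smul]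
    rw [finsum_congr key]
    refine finsum_eq_sum_of_support_subset _ ?_
    intro i hi
    simp only [Function.mem_support] at hi
    by_contra his
    apply hi
    refine Finset.sum_eq_zero fun j _ => ?_
    by_cases h0 : Eop n (n + j) w = 0
    · rw [h0, map_zero, smul_zero]
    · have h00 : Eop m (m + i) (Eop n (n + j) w) = 0 := by
        by_contra hne
        exact his (Finset.mem_coe.mpr (hC i j hne h0))
      rw [h00, smul_zero]
  have h2 : Cop Eop n q (Cop Eop m p w)
      = ∑ i ∈ s, ∑ j ∈ s,
          (((-(i : ℂ)) ^ p / p.factorial) * ((-(j : ℂ)) ^ q / q.factorial)) •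
            Eop n (n + j) (Eop m (m + i) w) := by
    have h2' : Cop Eop n q (Cop Eop m p w)
        = ∑ j ∈ s, ∑ i ∈ s,
            (((-(j : ℂ)) ^ q / q.factorial) * ((-(i : ℂ)) ^ p / p.factorial)) •
              Eop n (n + j) (Eop m (m + i) w) := by
      rw [Cop_eq_sum Eop m p w s hAsub]
      simp only [Cop]
      have key : ∀ j : ℤ,
          ((-(j : ℂ)) ^ q / q.factorial) •
              Eop n (n + j) (∑ i ∈ s, ((-(i : ℂ)) ^ p / p.factorial) • Eop m (m + i) w)
            = ∑ i ∈ s, (((-(j : ℂ)) ^ q / q.factorial) * ((-(i : ℂ)) ^ p / p.factorial)) •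
                Eop n (n + j) (Eop m (m + i) w) := by
        intro j
        rw [map_sum, Finset.smul_sum]
        exact Finset.sum_congr rfl fun i _ => by rw [map_smul, smul_smul]
      rw [finsum_congr key]
      refine finsum_eq_sum_of_support_subset _ ?_
      intro j hj
      simp only [Function.mem_support] at hj
      by_contra hjs
      apply hj
      refine Finset.sum_eq_zero fun i _ => ?_
      by_cases h0 : Eop m (m + i) w = 0
      · rw [h0, map_zero, smul_zero]
      · have h00 : Eop n (n + j) (Eop m (m + i) w) = 0 := by
          by_contra hne
          exact hjs (Finset.mem_coe.mpr (hD i j hne h0))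
        rw [h00, smul_zero]
    rw [h2', Finset.sum_comm]
    exact Finset.sum_congr rfl fun i _ => Finset.sum_congr rfl fun j _ => by rw [mul_comm]
  -- Step 2: apply the commutation relations termwise
  have hterm : ∀ i j : ℤ,
      (((-(i : ℂ)) ^ p / p.factorial) * ((-(j : ℂ)) ^ q / q.factorial)) •
          Eop m (m + i) (Eop n (n + j) w)
        - (((-(i : ℂ)) ^ p / p.factorial) * ((-(j : ℂ)) ^ q / q.factorial)) •
          Eop n (n + j) (Eop m (m + i) w)
      = (((-(i : ℂ)) ^ p / p.factorial) * ((-(j : ℂ)) ^ q / q.factorial)) •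
          (if m + i = n then Eop m (n + j) w else 0)
        - (((-(i : ℂ)) ^ p / p.factorial) * ((-(j : ℂ)) ^ q / q.factorial)) •
          (if m = n + j then Eop n (m + i) w else 0)
        + (((-(i : ℂ)) ^ p / p.factorial) * ((-(j : ℂ)) ^ q / q.factorial)) •
          ((if m = n + j ∧ m + i = n then (f m (m + i) : ℂ) * ℓ else 0) • w) := by
    intro i j
    have h := congrArg (fun T : Module.End ℂ W => T w) (hrel m (m + i) n (n + j))
    simp only [LinearMap.sub_apply, LinearMap.add_apply, Module.End.mul_apply,
      LinearMap.smul_apply, Module.End.one_apply] at h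
    rw [apply_ite (fun F : Module.End ℂ W => F w), apply_ite (fun F : Module.End ℂ W => F w),
      LinearMap.zero_apply] at h
    rw [← smul_sub, h, smul_add, smul_sub]
  have hsplit : Cop Eop m p (Cop Eop n q w) - Cop Eop n q (Cop Eop m p w)
      = (∑ i ∈ s, ∑ j ∈ s,
          (((-(i : ℂ)) ^ p / p.factorial) * ((-(j : ℂ)) ^ q / q.factorial)) •
            (if m + i = n then Eop m (n + j) w else 0))
        - (∑ i ∈ s, ∑ j ∈ s,
          (((-(i : ℂ)) ^ p / p.factorial) * ((-(j : ℂ)) ^ q / q.factorial)) •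
            (if m = n + j then Eop n (m + i) w else 0))
        + (∑ i ∈ s, ∑ j ∈ s,
          (((-(i : ℂ)) ^ p / p.factorial) * ((-(j : ℂ)) ^ q / q.factorial)) •
            ((if m = n + j ∧ m + i = n then (f m (m + i) : ℂ) * ℓ else 0) • w)) := by
    rw [h1, h2, ← Finset.sum_sub_distrib]
    simp only [← Finset.sum_sub_distrib]
    rw [Finset.sum_congr rfl fun i _ => Finset.sum_congr rfl fun j _ => hterm i j]
    simp only [Finset.sum_add_distrib, Finset.sum_sub_distrib]
  -- Step 3: evaluate the three double sums
  have e1 : (∑ i ∈ s, ∑ j ∈ s,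
        (((-(i : ℂ)) ^ p / p.factorial) * ((-(j : ℂ)) ^ q / q.factorial)) •
          (if m + i = n then Eop m (n + j) w else 0))
      = (((m : ℂ) - n) ^ p / p.factorial) •
          ∑ k ∈ Finset.range (q + 1),
            ((((n : ℂ) - m) ^ k / k.factorial) • Cop Eop m (q - k) w) := by
    have step1 : ∀ i ∈ s, (∑ j ∈ s,
        (((-(i : ℂ)) ^ p / p.factorial) * ((-(j : ℂ)) ^ q / q.factorial)) •
          (if m + i = n then Eop m (n + j) w else 0))
        = if m + i = n then ∑ j ∈ s,
            (((-(i : ℂ)) ^ p / p.factorial) * ((-(j : ℂ)) ^ q / q.factorial)) •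
              Eop m (n + j) w else 0 := by
      intro i _
      by_cases h : m + i = n
      · simp only [if_pos h]
      · simp only [if_neg h, smul_zero, Finset.sum_const_zero]
    rw [Finset.sum_congr rfl step1,
      Finset.sum_eq_single_of_mem (n - m) hnm (fun i _ hne => if_neg (by omega)),
      if_pos (by ring : m + (n - m) = n)]
    have step2 : ∀ j ∈ s,
        (((-((n - m : ℤ) : ℂ)) ^ p / p.factorial) * ((-(j : ℂ)) ^ q / q.factorial)) •
          Eop m (n + j) w
        = ((-((n - m : ℤ) : ℂ)) ^ p / p.factorial) •
            (((-(j : ℂ)) ^ q / q.factorial) • Eop m (m + (n - m) + j) w) := by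
      intro j _
      have e : n + j = m + (n - m) + j := by ring
      rw [e, mul_smul]
    rw [Finset.sum_congr rfl step2, ← Finset.smul_sum,
      shift_sum Eop m (n - m) q w s hAsub hA']
    congr 1
    · push_cast
      rw [neg_sub]
    · push_cast
      rfl
  have e2 : (∑ i ∈ s, ∑ j ∈ s,
        (((-(i : ℂ)) ^ p / p.factorial) * ((-(j : ℂ)) ^ q / q.factorial)) •
          (if m = n + j then Eop n (m + i) w else 0))
      = (((n : ℂ) - m) ^ q / q.factorial) •
          ∑ k ∈ Finset.range (p + 1),
            ((((m : ℂ) - n) ^ k / k.factorial) • Cop Eop n (p - k) w) := by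
    have step1 : ∀ i ∈ s, (∑ j ∈ s,
        (((-(i : ℂ)) ^ p / p.factorial) * ((-(j : ℂ)) ^ q / q.factorial)) •
          (if m = n + j then Eop n (m + i) w else 0))
        = (((-(i : ℂ)) ^ p / p.factorial) * ((-((m - n : ℤ) : ℂ)) ^ q / q.factorial)) •
            Eop n (m + i) w := by
      intro i _
      rw [Finset.sum_eq_single_of_mem (m - n) hmn
        (fun j _ hne => by rw [if_neg (by omega), smul_zero]),
        if_pos (by ring : m = n + (m - n))]
    rw [Finset.sum_congr rfl step1]
    have step2 : ∀ i ∈ s,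
        (((-(i : ℂ)) ^ p / p.factorial) * ((-((m - n : ℤ) : ℂ)) ^ q / q.factorial)) •
          Eop n (m + i) w
        = ((-((m - n : ℤ) : ℂ)) ^ q / q.factorial) •
            (((-(i : ℂ)) ^ p / p.factorial) • Eop n (n + (m - n) + i) w) := by
      intro i _
      have e : m + i = n + (m - n) + i := by ring
      rw [e, mul_comm, mul_smul]
    rw [Finset.sum_congr rfl step2, ← Finset.smul_sum,
      shift_sum Eop n (m - n) p w s hBsub hB']
    congr 1
    · push_cast
      rw [neg_sub]
    · push_cast
      rfl
  have e3 : (∑ i ∈ s, ∑ j ∈ s,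
        (((-(i : ℂ)) ^ p / p.factorial) * ((-(j : ℂ)) ^ q / q.factorial)) •
          ((if m = n + j ∧ m + i = n then (f m (m + i) : ℂ) * ℓ else 0) • w))
      = ((((m : ℂ) - n) ^ p / p.factorial) * (((n : ℂ) - m) ^ q / q.factorial)
          * (f m n : ℂ) * ℓ) • w := by
    rw [Finset.sum_eq_single_of_mem (n - m) hnm
      (fun i _ hne => Finset.sum_eq_zero fun j _ => by
        rw [if_neg (by rintro ⟨_, h⟩; omega), zero_smul, smul_zero]),
      Finset.sum_eq_single_of_mem (m - n) hmn
      (fun j _ hne => by rw [if_neg (by rintro ⟨h, _⟩; omega), zero_smul, smul_zero]),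
      if_pos ⟨by ring, by ring⟩]
    have e : m + (n - m) = n := by ring
    rw [e, smul_smul]
    congr 1
    push_cast
    rw [neg_sub, neg_sub]
    ring
  rw [hsplit, e1, e2, e3]
end
end

section
/- Let W be a gl̃_∞-module in category C_fin of level ℓ, regarded as a gl̃ᵉ_∞-module via B(m,x) = E(m,e^x). If W is irreducible as a gl̃_∞-module, then W is irreducible as a gl̃ᵉ_∞-module. In particular, for each m ∈ Z and w ∈ W, each vector E_{m,m+n}w (n ∈ Z) lies in the span of the vectors B̄(m,-k-1)w = Σ_{j∈Z}((-j)^k/k!)E_{m,m+j}w for k ≥ 0. -/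
noncomputable section

lemma key_vandermonde {W : Type*} [AddCommGroup W] [Module ℂ W]
    (v : ℤ → W) (hf : (Function.support v).Finite) (n : ℤ) :
    v n ∈ Submodule.span ℂ
      (Set.range fun p : ℕ => ∑ᶠ j : ℤ, ((-(j : ℂ)) ^ p / p.factorial) • v j) := by
  classical
  set s : Finset ℤ := hf.toFinset with hs
  have hsum : ∀ c : ℤ → ℂ, (∑ᶠ j : ℤ, c j • v j) = ∑ j ∈ s, c j • v j := by
    intro c
    refine finsum_eq_finset_sum_of_support_subset _ ?_
    intro j hj
    simp only [Function.mem_support] at hj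
    have : v j ≠ 0 := by intro h; simp [h] at hj
    simpa [hs] using this
  by_cases hn : n ∈ s
  · have hinj : Set.InjOn (fun j : ℤ => -(j : ℂ)) s := by
      intro a _ b _ hab
      simp only [neg_inj, Int.cast_inj] at hab; exact hab
    set P := Lagrange.basis s (fun j : ℤ => -(j : ℂ)) n with hP
    have heval : ∀ j ∈ s, P.eval (-(j : ℂ)) = if j = n then 1 else 0 := by
      intro j hj
      by_cases h : j = n
      · subst h; simp [hP, Lagrange.eval_basis_self hinj hj]
      · rw [if_neg h, hP]
        exact Lagrange.eval_basis_of_ne (v := fun j : ℤ => -(j : ℂ)) (Ne.symm h) hj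
    have hvn : v n = ∑ j ∈ s, (P.eval (-(j : ℂ))) • v j := by
      rw [Finset.sum_congr rfl (fun j hj => by rw [heval j hj])]
      simp [Finset.sum_ite_eq' s n (fun j => v j), hn]
    set d := P.natDegree + 1 with hd
    have hvn2 : v n = ∑ p ∈ Finset.range d,
        ((P.coeff p * p.factorial) • ∑ᶠ j : ℤ, ((-(j : ℂ)) ^ p / p.factorial) • v j) := by
      rw [hvn]
      have : ∀ j ∈ s, (P.eval (-(j : ℂ))) • v j
          = ∑ p ∈ Finset.range d, (P.coeff p * (-(j:ℂ)) ^ p) • v j := by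
        intro j _
        rw [Polynomial.eval_eq_sum_range, Finset.sum_smul]
      rw [Finset.sum_congr rfl this, Finset.sum_comm]
      refine Finset.sum_congr rfl fun p _ => ?_
      rw [hsum, Finset.smul_sum]
      refine Finset.sum_congr rfl fun j _ => ?_
      rw [smul_smul]
      congr 1
      have hfac : (p.factorial : ℂ) ≠ 0 := Nat.cast_ne_zero.mpr p.factorial_ne_zero
      field_simp
    rw [hvn2]
    exact Submodule.sum_mem _ fun p _ =>
      Submodule.smul_mem _ _ (Submodule.subset_span ⟨p, rfl⟩)
  · have : v n = 0 := by
      by_contra h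
      exact hn (by simpa [hs] using h)
    rw [this]; exact Submodule.zero_mem _

/-- Let `W` be a level-`ℓ` `gl̃_∞`-module in category `C_fin` (each `E(m,x)w` has only
finitely many nonzero coefficients), regarded as a `gl̃ᵉ_∞`-module via
`B(m,x) = E(m,e^x)`, i.e. via the operators `B̄(m,-k-1) = Σ_j ((-j)^k/k!) E_{m,m+j}`.
If `W` is irreducible as a `gl̃_∞`-module, then it is irreducible as a
`gl̃ᵉ_∞`-module; in particular every `E_{m,m+n} w` lies in the span of the vectors
`B̄(m,-k-1) w`, `k ≥ 0`. -/
theorem irreducibility_transfer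
    {W : Type*} [AddCommGroup W] [Module ℂ W] [Nontrivial W]
    (Eop : ℤ → ℤ → Module.End ℂ W) (ℓ : ℂ)
    (hrel : ∀ m n r s : ℤ,
      Eop m n * Eop r s - Eop r s * Eop m n =
        (if n = r then Eop m s else 0) - (if m = s then Eop r n else 0)
          + (if m = s ∧ n = r then (f m n : ℂ) * ℓ else 0) • (1 : Module.End ℂ W))
    (hfin : ∀ (m : ℤ) (w : W), (Function.support fun j : ℤ => Eop m (m + j) w).Finite)
    (hirr : ∀ p : Submodule ℂ W, (∀ m n : ℤ, ∀ x ∈ p, Eop m n x ∈ p) → p = ⊥ ∨ p = ⊤) :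
    (∀ p : Submodule ℂ W,
        (∀ (m : ℤ) (k : ℕ), ∀ x ∈ p, Cop Eop m k x ∈ p) → p = ⊥ ∨ p = ⊤) ∧
    (∀ (m : ℤ) (w : W) (n : ℤ),
        Eop m (m + n) w ∈ Submodule.span ℂ (Set.range fun k : ℕ => Cop Eop m k w)) := by
  have part2 : ∀ (m : ℤ) (w : W) (n : ℤ),
      Eop m (m + n) w ∈ Submodule.span ℂ (Set.range fun k : ℕ => Cop Eop m k w) := by
    intro m w n
    exact key_vandermonde (fun j => Eop m (m + j) w) (hfin m w) n
  refine ⟨?_, part2⟩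
  intro p hp
  apply hirr
  intro m n x hx
  have h := part2 m x (n - m)
  rw [add_sub_cancel] at h
  refine Submodule.span_le.mpr ?_ h
  rintro _ ⟨k, rfl⟩
  exact hp m k x hx
end
end

section
/- The polynomial algebra C[x_n | n ∈ Z], as a gl_∞-module with E_{m,n} acting as x_m ∂/∂x_n, decomposes as the direct sum of its homogeneous components A_r (r ≥ 0, spanned by monomials of total degree r), each A_r is a gl_∞-submodule, and each A_r is an irreducible gl_∞-module. -/
noncomputable section

open MvPolynomial

/-- The action of `E_{i,j} = x_i ∂/∂x_j` on the polynomial algebra `ℂ[x_n | n ∈ ℤ]`. -/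
def op (i j : ℤ) (p : MvPolynomial ℤ ℂ) : MvPolynomial ℤ ℂ :=
  X i * pderiv j p

open Finsupp

-- basic Finsupp helpers
lemma single_add_tsub {j : ℤ} {d : ℤ →₀ ℕ} (h : d j ≠ 0) :
    Finsupp.single j 1 + (d - Finsupp.single j 1) = d := by
  ext k
  by_cases hk : k = j
  · subst hk
    simp only [Finsupp.add_apply, Finsupp.tsub_apply, Finsupp.single_eq_same]
    omega
  · simp only [Finsupp.add_apply, Finsupp.tsub_apply,
      Finsupp.single_eq_of_ne' (fun h' => hk h'.symm)]
    omega

lemma degree_single (j : ℤ) : (Finsupp.single j (1:ℕ)).degree = 1 := by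
  exact Finsupp.degree_single j 1

lemma degree_add (a b : ℤ →₀ ℕ) : (a + b).degree = a.degree + b.degree := by
  simp only [Finsupp.degree_eq_weight_one]
  exact map_add _ a b

lemma degree_tsub_add {j : ℤ} {d : ℤ →₀ ℕ} (h : d j ≠ 0) :
    (d - Finsupp.single j 1).degree + 1 = d.degree := by
  have := single_add_tsub h
  have h1 := degree_add (Finsupp.single j 1) (d - Finsupp.single j 1)
  rw [single_add_tsub h, degree_single] at h1
  omega

lemma degree_add_single (i : ℤ) (d : ℤ →₀ ℕ) :
    (d + Finsupp.single i 1).degree = d.degree + 1 := by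
  rw [degree_add, degree_single]

lemma op_monomial (i j : ℤ) (d : ℤ →₀ ℕ) (c : ℂ) :
    op i j (monomial d c)
      = (d j : ℂ) • monomial (d - Finsupp.single j 1 + Finsupp.single i 1) c := by
  unfold op
  rw [pderiv_monomial, smul_monomial, smul_eq_mul,
    show (X i : MvPolynomial ℤ ℂ) = monomial (Finsupp.single i 1) 1 from rfl,
    monomial_mul, one_mul, mul_comm c, add_comm (Finsupp.single i 1)]

lemma opjj_monomial (j : ℤ) (d : ℤ →₀ ℕ) (c : ℂ) :
    op j j (monomial d c) = (d j : ℂ) • monomial d c := by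
  rw [op_monomial]
  rcases eq_or_ne (d j) 0 with h | h
  · simp [h]
  · rw [add_comm, single_add_tsub h]

lemma op_sum (i j : ℤ) {α : Type*} (s : Finset α) (f : α → MvPolynomial ℤ ℂ) :
    op i j (∑ a ∈ s, f a) = ∑ a ∈ s, op i j (f a) := by
  unfold op
  rw [map_sum, Finset.mul_sum]

lemma coeff_opjj (j : ℤ) (p : MvPolynomial ℤ ℂ) (e : ℤ →₀ ℕ) :
    coeff e (op j j p) = (e j : ℂ) * coeff e p := by
  nth_rewrite 1 [p.as_sum]
  rw [op_sum]
  simp only [opjj_monomial]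
  rw [MvPolynomial.coeff_sum]
  simp only [coeff_smul, coeff_monomial, smul_eq_mul, mul_ite, mul_zero]
  rw [Finset.sum_ite_eq' p.support e (fun d => (d j : ℂ) * coeff d p)]
  split_ifs with h
  · rfl
  · rw [MvPolynomial.notMem_support_iff.mp h, mul_zero]

example : True := trivial

lemma op_isHomogeneous {r : ℕ} (i j : ℤ) (p : MvPolynomial ℤ ℂ)
    (hp : p ∈ homogeneousSubmodule ℤ ℂ r) : op i j p ∈ homogeneousSubmodule ℤ ℂ r := by
  nth_rewrite 1 [p.as_sum]
  rw [op_sum]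
  apply Submodule.sum_mem
  intro d hd
  rw [op_monomial]
  rcases eq_or_ne (d j) 0 with h | h
  · simp [h]
  · apply Submodule.smul_mem
    rw [mem_homogeneousSubmodule]
    apply isHomogeneous_monomial
    have hdeg : d.degree = r := by
      rw [Finsupp.degree_eq_weight_one]
      exact hp (MvPolynomial.mem_support_iff.mp hd)
    have h1 := degree_tsub_add h
    rw [degree_add_single]
    omega

/-- Step A: from any nonzero element of an `op`-closed submodule we can extract
all its monomials. -/
lemma monomial_mem_of_mem {q : Submodule ℂ (MvPolynomial ℤ ℂ)}
    (hq : ∀ i j : ℤ, ∀ p ∈ q, op i j p ∈ q) :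
    ∀ (n : ℕ) (p : MvPolynomial ℤ ℂ), p ∈ q → p.support.card ≤ n →
      ∀ d ∈ p.support, monomial d (1 : ℂ) ∈ q := by
  intro n
  induction n with
  | zero =>
    intro p _ hc d hd
    rw [Nat.le_zero, Finset.card_eq_zero] at hc
    rw [hc] at hd
    exact absurd hd (Finset.notMem_empty d)
  | succ n ih =>
    intro p hp hc d hd
    by_cases hs : ∀ d' ∈ p.support, d' = d
    · have hsupp : p.support = {d} := Finset.eq_singleton_iff_unique_mem.mpr ⟨hd, hs⟩
      have hpm : p = monomial d (coeff d p) := by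
        nth_rewrite 1 [p.as_sum]
        rw [hsupp, Finset.sum_singleton]
      obtain ⟨c, hco, hpm⟩ : ∃ c : ℂ, c ≠ 0 ∧ p = monomial d c :=
        ⟨coeff d p, MvPolynomial.mem_support_iff.mp hd, hpm⟩
      have hmono : monomial d (1 : ℂ) = c⁻¹ • p := by
        rw [hpm, smul_monomial, smul_eq_mul, inv_mul_cancel₀ hco]
      rw [hmono]
      exact q.smul_mem _ hp
    · push_neg at hs
      obtain ⟨d', hd', hne⟩ := hs
      have hj : ∃ j, d' j ≠ d j := by
        by_contra h
        push_neg at h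
        exact hne (Finsupp.ext h)
      obtain ⟨j, hj⟩ := hj
      set p' := op j j p - (d' j : ℂ) • p with hp'def
      have hp'q : p' ∈ q := q.sub_mem (hq j j p hp) (q.smul_mem _ hp)
      have hcoeff : ∀ e, coeff e p' = ((e j : ℂ) - (d' j : ℂ)) * coeff e p := by
        intro e
        rw [hp'def, coeff_sub, coeff_opjj, coeff_smul, smul_eq_mul]
        ring
      have hsub : p'.support ⊆ p.support.erase d' := by
        intro e he
        rw [MvPolynomial.mem_support_iff, hcoeff] at he
        rw [Finset.mem_erase]
        constructor
        · rintro rfl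
          exact he (by rw [sub_self, zero_mul])
        · rw [MvPolynomial.mem_support_iff]
          exact fun h => he (by rw [h, mul_zero])
      have hdp' : d ∈ p'.support := by
        rw [MvPolynomial.mem_support_iff, hcoeff]
        apply mul_ne_zero
        · rw [sub_ne_zero]
          exact fun h => hj (Nat.cast_injective h).symm
        · exact MvPolynomial.mem_support_iff.mp hd
      have hcard : p'.support.card ≤ n := by
        have h1 := Finset.card_le_card hsub
        have h2 := Finset.card_erase_of_mem hd'
        omega
      exact ih p' hp'q hcard d hdp'

example : True := trivial

lemma eq_of_le_of_degree_eq {d e : ℤ →₀ ℕ} (h : ∀ k, d k ≤ e k)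
    (hdeg : d.degree = e.degree) : d = e := by
  ext k
  refine le_antisymm (h k) ?_
  by_contra hlt
  push_neg at hlt
  have hk : k ∈ d.support ∪ e.support := by
    apply Finset.mem_union_right
    rw [Finsupp.mem_support_iff]
    omega
  have hsum : ∑ i ∈ d.support ∪ e.support, d i < ∑ i ∈ d.support ∪ e.support, e i :=
    Finset.sum_lt_sum (fun i _ => h i) ⟨k, hk, hlt⟩
  have h1 : d.degree = ∑ i ∈ d.support ∪ e.support, d i :=
    Finset.sum_subset Finset.subset_union_left
      (fun i _ hi => Finsupp.notMem_support_iff.mp hi)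
  have h2 : e.degree = ∑ i ∈ d.support ∪ e.support, e i :=
    Finset.sum_subset Finset.subset_union_right
      (fun i _ hi => Finsupp.notMem_support_iff.mp hi)
  omega

lemma sum_sub_eq (d e : ℤ →₀ ℕ) {s : Finset ℤ} (hs : d.support ⊆ s) :
    ∑ k ∈ s, (d k - e k) = ∑ k ∈ d.support, (d k - e k) :=
  (Finset.sum_subset hs (fun k _ hk => by
    rw [Finsupp.notMem_support_iff.mp hk, Nat.zero_sub])).symm

/-- Step B: connectivity between monomials of the same degree. -/
lemma monomial_move {q : Submodule ℂ (MvPolynomial ℤ ℂ)}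
    (hq : ∀ i j : ℤ, ∀ p ∈ q, op i j p ∈ q) :
    ∀ (n : ℕ) (d e : ℤ →₀ ℕ), d.degree = e.degree →
      (∑ k ∈ d.support, (d k - e k)) ≤ n → monomial d (1 : ℂ) ∈ q →
      monomial e (1 : ℂ) ∈ q := by
  intro n
  induction n with
  | zero =>
    intro d e hdeg hn hd
    have heq : d = e := by
      apply eq_of_le_of_degree_eq _ hdeg
      intro k
      by_cases hk : k ∈ d.support
      · have := Finset.sum_eq_zero_iff.mp (Nat.le_zero.mp hn) k hk
        omega
      · have := Finsupp.notMem_support_iff.mp hk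
        omega
    rwa [heq] at hd
  | succ n ih =>
    intro d e hdeg hn hd
    by_cases hde : d = e
    · rwa [hde] at hd
    · have hj : ∃ j, e j < d j := by
        by_contra h
        push_neg at h
        exact hde (eq_of_le_of_degree_eq h hdeg)
      have hi : ∃ i, d i < e i := by
        by_contra h
        push_neg at h
        exact hde (eq_of_le_of_degree_eq h hdeg.symm).symm
      obtain ⟨j, hj⟩ := hj
      obtain ⟨i, hi⟩ := hi
      have hij : i ≠ j := fun h => by rw [h] at hi; omega
      have hdj : d j ≠ 0 := by omega
      set d' := d - Finsupp.single j 1 + Finsupp.single i 1 with hd'def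
      -- d' is in q
      have hd'q : monomial d' (1 : ℂ) ∈ q := by
        have h1 : op i j (monomial d (1 : ℂ)) = (d j : ℂ) • monomial d' 1 :=
          op_monomial i j d 1
        have h2 : monomial d' (1 : ℂ) = ((d j : ℂ))⁻¹ • op i j (monomial d (1 : ℂ)) := by
          rw [h1, smul_smul, inv_mul_cancel₀ (by exact_mod_cast hdj), one_smul]
        rw [h2]
        exact q.smul_mem _ (hq i j _ hd)
      -- pointwise description of d'
      have hd'app : ∀ k, d' k = (d k - (if j = k then 1 else 0)) + (if i = k then 1 else 0) := by
        intro k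
        rw [hd'def]
        simp [Finsupp.add_apply, Finsupp.tsub_apply, Finsupp.single_apply]
      -- degree is preserved
      have hdeg' : d'.degree = e.degree := by
        rw [hd'def, degree_add_single]
        have := degree_tsub_add hdj
        omega
      -- measure decreases
      refine ih d' e hdeg' ?_ hd'q
      set s := (d.support ∪ e.support) ∪ {i, j} with hsdef
      have hds : d.support ⊆ s := fun k hk =>
        Finset.mem_union_left _ (Finset.mem_union_left _ hk)
      have hjs : j ∈ s := by
        apply Finset.mem_union_right
        simp
      have hd's : d'.support ⊆ s := by
        intro k hk
        rw [Finsupp.mem_support_iff, hd'app] at hk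
        by_cases hki : i = k
        · subst hki
          apply Finset.mem_union_right
          simp
        · rw [if_neg hki] at hk
          apply hds
          rw [Finsupp.mem_support_iff]
          omega
      rw [← sum_sub_eq d' e hd's]
      rw [← sum_sub_eq d e hds] at hn
      rw [← Finset.add_sum_erase _ _ hjs] at hn ⊢
      have hterm : ∀ k ∈ s.erase j, d' k - e k = d k - e k := by
        intro k hk
        have hkj : k ≠ j := (Finset.mem_erase.mp hk).1
        rw [hd'app, if_neg (fun h => hkj h.symm)]
        by_cases hki : i = k
        · subst hki
          simp only [if_pos rfl, if_true]
          omega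
        · rw [if_neg hki]
          omega
      rw [Finset.sum_congr rfl hterm]
      have hjterm : d' j - e j + 1 = d j - e j := by
        rw [hd'app, if_pos rfl, if_neg hij]
        omega
      omega

example : True := trivial

/-- The polynomial algebra `ℂ[x_n | n ∈ ℤ]`, as a `gl_∞`-module via
`E_{m,n} ↦ x_m ∂/∂x_n`, is the direct sum of its homogeneous components
`A_r` (`r ≥ 0`), each `A_r` is a `gl_∞`-submodule, and each `A_r` is an
irreducible `gl_∞`-module. -/
theorem symmetric_algebra_decomposition :
    DirectSum.IsInternal (fun r : ℕ => homogeneousSubmodule ℤ ℂ r) ∧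
    (∀ (r : ℕ) (i j : ℤ), ∀ p ∈ homogeneousSubmodule ℤ ℂ r,
      op i j p ∈ homogeneousSubmodule ℤ ℂ r) ∧
    (∀ r : ℕ, homogeneousSubmodule ℤ ℂ r ≠ ⊥ ∧
      ∀ q : Submodule ℂ (MvPolynomial ℤ ℂ), q ≤ homogeneousSubmodule ℤ ℂ r →
        (∀ i j : ℤ, ∀ p ∈ q, op i j p ∈ q) →
        q = ⊥ ∨ q = homogeneousSubmodule ℤ ℂ r) := by
  refine ⟨?_, ?_, ?_⟩
  · haveI := MvPolynomial.decomposition (σ := ℤ) (R := ℂ)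
    exact DirectSum.Decomposition.isInternal _
  · intro r i j p hp
    exact op_isHomogeneous i j p hp
  · intro r
    constructor
    · intro hbot
      have hmem : monomial (Finsupp.single 0 r) (1 : ℂ) ∈ homogeneousSubmodule ℤ ℂ r := by
        rw [mem_homogeneousSubmodule]
        apply isHomogeneous_monomial
        rcases eq_or_ne r 0 with hr | hr
        · simp [hr, Finsupp.degree]
        · exact Finsupp.degree_single 0 r
      rw [hbot, Submodule.mem_bot] at hmem
      have := congrArg (coeff (Finsupp.single 0 r)) hmem
      rw [coeff_monomial, if_pos rfl, coeff_zero] at this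
      exact one_ne_zero this
    · intro q hle hq
      by_cases hbot : q = ⊥
      · exact Or.inl hbot
      · right
        refine le_antisymm hle ?_
        obtain ⟨p₀, hp₀q, hp₀⟩ := Submodule.exists_mem_ne_zero_of_ne_bot hbot
        obtain ⟨d₀, hd₀⟩ := Finset.nonempty_iff_ne_empty.mpr
          (fun h => hp₀ (MvPolynomial.support_eq_empty.mp h))
        have hm₀ : monomial d₀ (1 : ℂ) ∈ q :=
          monomial_mem_of_mem hq p₀.support.card p₀ hp₀q le_rfl d₀ hd₀
        have hdeg₀ : d₀.degree = r := by
          rw [Finsupp.degree_eq_weight_one]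
          exact (hle hp₀q) (MvPolynomial.mem_support_iff.mp hd₀)
        intro p hp
        rw [p.as_sum]
        apply Submodule.sum_mem
        intro d hd
        have hdeg : d.degree = r := by
          rw [Finsupp.degree_eq_weight_one]
          exact hp (MvPolynomial.mem_support_iff.mp hd)
        have hmd : monomial d (1 : ℂ) ∈ q :=
          monomial_move hq (∑ k ∈ d₀.support, (d₀ k - d k)) d₀ d
            (by rw [hdeg₀, hdeg]) le_rfl hm₀
        have : monomial d (coeff d p) = coeff d p • monomial d (1 : ℂ) := by
          rw [smul_monomial, smul_eq_mul, mul_one]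
        rw [this]
        exact q.smul_mem _ hmd
end
end
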